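/- Let U be the affine 2-dimensional weight-vector set on the grid {0,...,p} × {0,...,q} given by u_{i,j} = a + bi + cj and v_{i,j} = e + ci + dj with a, c, e ≥ 1 and b, d ≥ 0, and fix i with 0 ≤ i < p. Then for each fixed i the sequence j ↦ u_{i,j} is strictly increasing in j, and for each fixed j the sequence i ↦ v_{i,j} is strictly increasing in i; consequently, distinct lattice paths from (0,0) to (p,q) give distinct increasing maximal 2-dimensional U-parking functions via P ↦ (weights of E-steps of P minus 1; weights of N-steps of P minus 1). -/

import Mathlib

/-- For a monotone lattice path from `(0,0)` to `(p,q)` encoded by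
`f : Fin p → ℕ` (`f i` = number of north steps before the `(i+1)`-st east
step), `gOf p f j` is the number of east steps before the `(j+1)`-st north
step. -/
def gOf (p : ℕ) (f : Fin p → ℕ) (j : ℕ) : ℕ :=
  (Finset.univ.filter fun i : Fin p => f i ≤ j).card

/-- For the affine node set `u_{i,j} = a + bi + cj`, `v_{i,j} = e + ci + dj`
with `a, c, e ≥ 1`: for fixed `i` the weights `u_{i,j}` are strictly increasing
in `j`, for fixed `j` the weights `v_{i,j}` are strictly increasing in `i`, and
consequently the map sending a lattice path to its associated pair of sequences
(step weights minus one) is injective on monotone lattice paths. -/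
theorem affine_weights_strictMono_and_path_inj (p q a b c d e : ℕ)
    (ha : 1 ≤ a) (hc : 1 ≤ c) (he : 1 ≤ e) :
    (∀ i : ℕ, StrictMono fun j : ℕ => a + b * i + c * j) ∧
    (∀ j : ℕ, StrictMono fun i : ℕ => e + c * i + d * j) ∧
    (∀ f f' : Fin p → ℕ, Monotone f → Monotone f' →
      (∀ i, f i ≤ q) → (∀ i, f' i ≤ q) →
      (fun i : Fin p => a + b * (i : ℕ) + c * f i - 1) =
        (fun i : Fin p => a + b * (i : ℕ) + c * f' i - 1) →
      (fun j : Fin q => e + c * gOf p f (j : ℕ) + d * (j : ℕ) - 1) =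
        (fun j : Fin q => e + c * gOf p f' (j : ℕ) + d * (j : ℕ) - 1) →
      f = f') := by
  refine ⟨?_, ?_, ?_⟩
  · intro i j k hjk
    have : c * j < c * k := by
      exact Nat.mul_lt_mul_of_pos_left hjk hc
    simp only []
    omega
  · intro j i k hik
    have : c * i < c * k := by
      exact Nat.mul_lt_mul_of_pos_left hik hc
    simp only []
    omega
  · intro f f' _ _ _ _ hu _
    funext i
    have h := congrFun hu i
    have h1 : a + b * (i : ℕ) + c * f i = a + b * (i : ℕ) + c * f' i := by omega
    have h2 : c * f i = c * f' i := by omega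
    exact Nat.eq_of_mul_eq_mul_left hc h2
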